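/- arXiv:1509.08453 — 3 statements merged into one kernel-verified Lean document; each statement's English description precedes it below -/
import Mathlib

section
/- Let C be a triangulated category equipped with a weight structure w, let M ∈ C_{w≤0} and N ∈ C_{w≥0}. Fix a distinguished triangle X_1[1] → M[1] → Y_1[1] → X_1[2] which is a 0-weight decomposition of M[1] (so X_1[1] ∈ C_{w≤0} and Y_1[1] ∈ C_{w≥1}), and a 0-weight decomposition X_2 →g N → Y → X_2[1] of N; let f : M → Y_1 be the morphism obtained by deshifting M[1] → Y_1[1]. Then Y_1 ∈ C_{w=0}, X_2 ∈ C_{w=0}, and every morphism from M to N can be written as g ∘ h ∘ f for some morphism h : Y_1 → X_2. -/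
open CategoryTheory CategoryTheory.Limits CategoryTheory.Pretriangulated ZeroObject

universe v u

variable (C : Type u) [Category.{v} C] [HasZeroObject C] [Preadditive C] [HasShift C ℤ]
  [∀ n : ℤ, (shiftFunctor C n).Additive] [Pretriangulated C]

/-- A weight structure on a triangulated category `C`: a pair of retract-closed classes
`le = C_{w≤0}` and `ge = C_{w≥0}` satisfying semi-invariance with respect to translations,
orthogonality, and the existence of weight decompositions. -/
structure WeightStructure where
  /-- the class `C_{w≤0}` -/
  le : Set C
  /-- the class `C_{w≥0}` -/
  ge : Set C
  /-- `C_{w≤0}` is closed under retracts -/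
  le_retract : ∀ ⦃X Y : C⦄ (i : X ⟶ Y) (r : Y ⟶ X), i ≫ r = 𝟙 X → le Y → le X
  /-- `C_{w≥0}` is closed under retracts -/
  ge_retract : ∀ ⦃X Y : C⦄ (i : X ⟶ Y) (r : Y ⟶ X), i ≫ r = 𝟙 X → ge Y → ge X
  /-- `C_{w≤0} ⊆ C_{w≤0}[1]`, i.e. `X ∈ C_{w≤0} → X[-1] ∈ C_{w≤0}` -/
  le_shift : ∀ ⦃X : C⦄, le X → le ((shiftFunctor C (-1 : ℤ)).obj X)
  /-- `C_{w≥0}[1] ⊆ C_{w≥0}`, i.e. `X ∈ C_{w≥0} → X[1] ∈ C_{w≥0}` -/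
  ge_shift : ∀ ⦃X : C⦄, ge X → ge ((shiftFunctor C (1 : ℤ)).obj X)
  /-- orthogonality: `Hom(X, Y[1]) = 0` for `X ∈ C_{w≤0}`, `Y ∈ C_{w≥0}` -/
  orth : ∀ ⦃X Y : C⦄, le X → ge Y → ∀ f : X ⟶ (shiftFunctor C (1 : ℤ)).obj Y, f = 0
  /-- existence of weight decompositions -/
  decomp : ∀ M : C, ∃ (X Y : C) (f : X ⟶ M) (g : M ⟶ Y)
      (h : Y ⟶ (shiftFunctor C (1 : ℤ)).obj X),
      Triangle.mk f g h ∈ (distTriang C) ∧ le X ∧ ge ((shiftFunctor C (-1 : ℤ)).obj Y)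

variable {C}

namespace WeightStructure

/-- `X ∈ C_{w≤i} = C_{w≤0}[i]`, i.e. `X[-i] ∈ C_{w≤0}`. -/
def leDeg (w : WeightStructure C) (i : ℤ) (X : C) : Prop :=
  w.le ((shiftFunctor C (-i)).obj X)

/-- `X ∈ C_{w≥i} = C_{w≥0}[i]`, i.e. `X[-i] ∈ C_{w≥0}`. -/
def geDeg (w : WeightStructure C) (i : ℤ) (X : C) : Prop :=
  w.ge ((shiftFunctor C (-i)).obj X)

/-- The triangle `A → M → B → A[1]` is an `m`-weight decomposition of `M`:
it is distinguished, `A ∈ C_{w≤m}` and `B ∈ C_{w≥m+1}`. -/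
def IsWeightDecomp (w : WeightStructure C) (m : ℤ) {A M B : C}
    (f : A ⟶ M) (g : M ⟶ B) (h : B ⟶ (shiftFunctor C (1 : ℤ)).obj A) : Prop :=
  Triangle.mk f g h ∈ (distTriang C) ∧ w.leDeg m A ∧ w.geDeg (m + 1) B

/-- `g : M ⟶ N` kills weights `m,…,n`: there exist an `n`-weight decomposition of `M` and an
`(m-1)`-weight decomposition of `N` such that the composite `w_{≤n}M → M → N → w_{≥m}N` is `0`. -/
def KillsWeights (w : WeightStructure C) (m n : ℤ) {M N : C} (g : M ⟶ N) : Prop :=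
  ∃ (A B A' B' : C) (f : A ⟶ M) (p : M ⟶ B) (δ : B ⟶ (shiftFunctor C (1 : ℤ)).obj A)
    (f' : A' ⟶ N) (p' : N ⟶ B') (δ' : B' ⟶ (shiftFunctor C (1 : ℤ)).obj A'),
    w.IsWeightDecomp n f p δ ∧ w.IsWeightDecomp (m - 1) f' p' δ' ∧ f ≫ g ≫ p' = 0

/-- `M` is without weights `m,…,n` if `𝟙 M` kills weights `m,…,n`. -/
def WithoutWeights (w : WeightStructure C) (m n : ℤ) (M : C) : Prop :=
  w.KillsWeights m n (𝟙 M)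

end WeightStructure


namespace WeightStructure

lemma le_of_iso (w : WeightStructure C) {X Y : C} (e : X ≅ Y) (h : w.le X) : w.le Y :=
  w.le_retract e.inv e.hom e.inv_hom_id h

lemma ge_of_iso (w : WeightStructure C) {X Y : C} (e : X ≅ Y) (h : w.ge X) : w.ge Y :=
  w.ge_retract e.inv e.hom e.inv_hom_id h

lemma hom_zero₁ (w : WeightStructure C) {X Z : C} (hX : w.le X)
    (hZ : w.ge ((shiftFunctor C (-1 : ℤ)).obj Z)) (f : X ⟶ Z) : f = 0 := by
  have e : (shiftFunctor C (1 : ℤ)).obj ((shiftFunctor C (-1 : ℤ)).obj Z) ≅ Z :=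
    (shiftFunctorCompIsoId C (-1 : ℤ) (1 : ℤ) (by omega)).app Z
  have h0 := w.orth hX hZ (f ≫ e.inv)
  calc f = (f ≫ e.inv) ≫ e.hom := by simp
  _ = 0 := by rw [h0, zero_comp]

lemma hom_zero₂ (w : WeightStructure C) {X Z : C}
    (hX : w.le ((shiftFunctor C (1 : ℤ)).obj X)) (hZ : w.ge Z) (f : X ⟶ Z) : f = 0 := by
  apply (shiftFunctor C (1 : ℤ)).map_injective
  rw [Functor.map_zero]
  exact w.orth hX hZ _

lemma le_ext (w : WeightStructure C) (T : Triangle C) (hT : T ∈ distTriang C)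
    (h1 : w.le T.obj₁) (h3 : w.le T.obj₃) : w.le T.obj₂ := by
  obtain ⟨X, Y, a, b, c, hdt, hX, hY⟩ := w.decomp T.obj₂
  have hb : b = 0 := by
    obtain ⟨g, hg⟩ := Triangle.yoneda_exact₂ T hT b (w.hom_zero₁ h1 hY _)
    rw [hg, w.hom_zero₁ h3 hY g, comp_zero]
  obtain ⟨s, hs⟩ := Triangle.coyoneda_exact₂ _ hdt (𝟙 T.obj₂)
    (by rw [hb]; exact comp_zero)
  exact w.le_retract s a hs.symm hX

lemma decomp_shift (w : WeightStructure C) (B : C) :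
    ∃ (T : Triangle C), T ∈ (distTriang C) ∧ Nonempty (T.obj₂ ≅ B) ∧
      w.le ((shiftFunctor C (1 : ℤ)).obj T.obj₁) ∧ w.ge T.obj₃ := by
  obtain ⟨X, Y, a, b, c, hdt, hX, hY⟩ := w.decomp ((shiftFunctor C (1 : ℤ)).obj B)
  exact ⟨_, Pretriangulated.Triangle.shift_distinguished _ hdt (-1),
    ⟨(shiftFunctorCompIsoId C (1 : ℤ) (-1 : ℤ) (by omega)).app B⟩,
    w.le_of_iso ((shiftFunctorCompIsoId C (-1 : ℤ) (1 : ℤ) (by omega)).app X).symm hX, hY⟩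

lemma ge_ext (w : WeightStructure C) (T : Triangle C) (hT : T ∈ distTriang C)
    (h1 : w.ge T.obj₁) (h3 : w.ge T.obj₃) : w.ge T.obj₂ := by
  obtain ⟨D, hD, ⟨e2⟩, hX1, hY3⟩ := w.decomp_shift T.obj₂
  have hm : D.mor₁ = 0 := by
    have h0 : D.mor₁ ≫ e2.hom = 0 := by
      obtain ⟨g, hg⟩ := Triangle.coyoneda_exact₂ T hT (D.mor₁ ≫ e2.hom)
        (w.hom_zero₂ hX1 h3 _)
      rw [hg, w.hom_zero₂ hX1 h1 g, zero_comp]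
    calc D.mor₁ = (D.mor₁ ≫ e2.hom) ≫ e2.inv := by simp
    _ = 0 := by rw [h0, zero_comp]
  obtain ⟨s, hs⟩ := Triangle.yoneda_exact₂ D hD (𝟙 D.obj₂) (by rw [hm, zero_comp])
  exact w.ge_of_iso e2 (w.ge_retract D.mor₂ s hs.symm hY3)

lemma leDeg_zero_iff (w : WeightStructure C) (Z : C) : w.leDeg 0 Z ↔ w.le Z := by
  unfold leDeg
  rw [neg_zero]
  exact ⟨fun h => w.le_of_iso ((shiftFunctorZero C ℤ).app Z) h,
    fun h => w.le_of_iso ((shiftFunctorZero C ℤ).app Z).symm h⟩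

lemma geDeg_zero_iff (w : WeightStructure C) (Z : C) : w.geDeg 0 Z ↔ w.ge Z := by
  unfold geDeg
  rw [neg_zero]
  exact ⟨fun h => w.ge_of_iso ((shiftFunctorZero C ℤ).app Z) h,
    fun h => w.ge_of_iso ((shiftFunctorZero C ℤ).app Z).symm h⟩

lemma ge_of_geDeg_one_shift (w : WeightStructure C) {Z : C}
    (h : w.geDeg 1 ((shiftFunctor C (1 : ℤ)).obj Z)) : w.ge Z :=
  w.ge_of_iso ((shiftFunctorCompIsoId C (1 : ℤ) (-1 : ℤ) (by omega)).app Z) h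

end WeightStructure

/-- Proposition 1.2.1(9): for `M ∈ C_{w≤0}` and `N ∈ C_{w≥0}`, fixing a `0`-weight
decomposition `X₁[1] → M[1] → Y₁[1] → X₁[2]` of `M[1]` and a `0`-weight decomposition
`X₂ → N → Y → X₂[1]` of `N`, we have `Y₁, X₂ ∈ C_{w=0}` and every morphism `M ⟶ N`
factors as `g ∘ h ∘ f`. -/
theorem morphism_factors_through_heart (w : WeightStructure C) {M N : C}
    (hM : w.le M) (hN : w.ge N) {X₁ Y₁ : C}
    (α : (shiftFunctor C (1 : ℤ)).obj X₁ ⟶ (shiftFunctor C (1 : ℤ)).obj M)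
    (β : (shiftFunctor C (1 : ℤ)).obj M ⟶ (shiftFunctor C (1 : ℤ)).obj Y₁)
    (γ : (shiftFunctor C (1 : ℤ)).obj Y₁ ⟶
      (shiftFunctor C (1 : ℤ)).obj ((shiftFunctor C (1 : ℤ)).obj X₁))
    (hd : w.IsWeightDecomp 0 α β γ)
    (f : M ⟶ Y₁) (hf : (shiftFunctor C (1 : ℤ)).map f = β)
    {X₂ Y : C} (g : X₂ ⟶ N) (q : N ⟶ Y) (δ : Y ⟶ (shiftFunctor C (1 : ℤ)).obj X₂)
    (hd' : w.IsWeightDecomp 0 g q δ) :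
    (w.leDeg 0 Y₁ ∧ w.geDeg 0 Y₁) ∧ (w.leDeg 0 X₂ ∧ w.geDeg 0 X₂) ∧
    ∀ φ : M ⟶ N, ∃ h : Y₁ ⟶ X₂, φ = f ≫ h ≫ g := by
  obtain ⟨hT0, hle1, hge1⟩ := hd
  obtain ⟨hT0', hle2, hge2⟩ := hd'
  simp only [zero_add] at hge1 hge2
  have hX₁ : w.le ((shiftFunctor C (1 : ℤ)).obj X₁) := (w.leDeg_zero_iff _).1 hle1
  have hY₁ge : w.ge Y₁ := w.ge_of_geDeg_one_shift hge1
  have hX₂le : w.le X₂ := (w.leDeg_zero_iff _).1 hle2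
  have hYge : w.ge ((shiftFunctor C (-1 : ℤ)).obj Y) := hge2
  have hX₂ge : w.ge X₂ := by
    have hinv := inv_rot_of_distTriang _ hT0'
    exact w.ge_ext _ hinv hYge hN
  have hY₁le : w.le Y₁ := by
    have hsh := Pretriangulated.Triangle.shift_distinguished _ hT0 (-1)
    have hrot := rot_of_distTriang _ hsh
    refine w.le_of_iso ((shiftFunctorCompIsoId C (1 : ℤ) (-1 : ℤ) (by omega)).app Y₁)
      (w.le_ext _ hrot ?_ ?_)
    · exact w.le_of_iso ((shiftFunctorCompIsoId C (1 : ℤ) (-1 : ℤ) (by omega)).app M).symm hM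
    · exact w.le_of_iso
        ((shiftFunctorCompIsoId C (-1 : ℤ) (1 : ℤ) (by omega)).app
          ((shiftFunctor C (1 : ℤ)).obj X₁)).symm hX₁
  refine ⟨⟨(w.leDeg_zero_iff _).2 hY₁le, (w.geDeg_zero_iff _).2 hY₁ge⟩,
    ⟨hle2, (w.geDeg_zero_iff _).2 hX₂ge⟩, ?_⟩
  intro φ
  have hq : φ ≫ q = 0 := w.hom_zero₁ hM hYge _
  obtain ⟨ψ, hψ⟩ := Triangle.coyoneda_exact₂ _ hT0' φ hq
  change φ = ψ ≫ g at hψ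
  have hαψ := w.orth hX₁ hX₂ge (α ≫ (shiftFunctor C (1 : ℤ)).map ψ)
  obtain ⟨h', hh'⟩ := Triangle.yoneda_exact₂ _ hT0 ((shiftFunctor C (1 : ℤ)).map ψ) hαψ
  change (shiftFunctor C (1 : ℤ)).map ψ = β ≫ h' at hh'
  obtain ⟨h, hh⟩ := (shiftFunctor C (1 : ℤ)).map_surjective h'
  refine ⟨h, ?_⟩
  have hψf : ψ = f ≫ h := (shiftFunctor C (1 : ℤ)).map_injective
    (by rw [Functor.map_comp, hf, hh, ← hh'])
  rw [hψ, hψf]; exact Category.assoc _ _ _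
end

section
/- Let C and D be triangulated categories equipped with weight structures w and w' respectively, and let F : C → D be an exact (triangulated) functor that is weight-exact (F maps C_{w≤0} into D_{w'≤0} and C_{w≥0} into D_{w'≥0}) and fully faithful. Let m ≤ n be integers and let h be a morphism in C. If F(h) kills weights m,…,n with respect to w', then h kills weights m,…,n with respect to w. -/
open CategoryTheory CategoryTheory.Limits CategoryTheory.Pretriangulated ZeroObject

universe v u

variable (C : Type u) [Category.{v} C] [HasZeroObject C] [Preadditive C] [HasShift C ℤ]
  [∀ n : ℤ, (shiftFunctor C n).Additive] [Pretriangulated C]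

variable {C}

namespace WeightStructure

lemma le_iso (w : WeightStructure C) {X Y : C} (e : X ≅ Y) (hX : w.le X) : w.le Y :=
  w.le_retract e.inv e.hom e.inv_hom_id hX

lemma ge_iso (w : WeightStructure C) {X Y : C} (e : X ≅ Y) (hX : w.ge X) : w.ge Y :=
  w.ge_retract e.inv e.hom e.inv_hom_id hX

/-- Orthogonality in arbitrary degrees: a morphism from an object of weights `≤ a`
to an object of weights `≥ a + 1` vanishes. -/
lemma orth_deg (w : WeightStructure C) {a : ℤ} {X Y : C}
    (hX : w.leDeg a X) (hY : w.geDeg (a + 1) Y) (φ : X ⟶ Y) : φ = 0 := by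
  apply (shiftFunctor C (-a)).map_injective
  rw [Functor.map_zero]
  have e : (shiftFunctor C (-a)).obj Y ≅
      (shiftFunctor C (1 : ℤ)).obj ((shiftFunctor C (-(a + 1))).obj Y) :=
    ((shiftFunctorAdd' C (-(a+1)) 1 (-a) (by ring)).app Y)
  have h0 : ((shiftFunctor C (-a)).map φ) ≫ e.hom = 0 :=
    w.orth hX hY _
  have := congrArg (fun ψ => ψ ≫ e.inv) h0
  simpa using this

end WeightStructure

namespace WeightStructure

/-- Existence of `k`-weight decompositions for every `k : ℤ`. -/
lemma exists_weightDecomp (w : WeightStructure C) (k : ℤ) (M : C) :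
    ∃ (A B : C) (f : A ⟶ M) (p : M ⟶ B) (δ : B ⟶ (shiftFunctor C (1 : ℤ)).obj A),
      w.IsWeightDecomp k f p δ := by
  obtain ⟨X, Y, f, g, h, hT, hX, hY⟩ := w.decomp ((shiftFunctor C (-k)).obj M)
  -- shift the triangle by k
  have hT' := Pretriangulated.Triangle.shift_distinguished _ hT k
  set e : (shiftFunctor C k).obj ((shiftFunctor C (-k)).obj M) ≅ M :=
    ((shiftFunctorCompIsoId C (-k) k (by ring)).app M)
  refine ⟨(shiftFunctor C k).obj X, (shiftFunctor C k).obj Y,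
    k.negOnePow • ((shiftFunctor C k).map f ≫ e.hom),
    k.negOnePow • (e.inv ≫ (shiftFunctor C k).map g),
    k.negOnePow • ((shiftFunctor C k).map h ≫ (shiftFunctorComm C 1 k).hom.app X),
    ?_, ?_, ?_⟩
  · refine Pretriangulated.isomorphic_distinguished _ hT' _ ?_
    refine Triangle.isoMk _ _ (Iso.refl _) e.symm (Iso.refl _) ?_ ?_ ?_
    · change (k.negOnePow • ((shiftFunctor C k).map f ≫ e.hom)) ≫ e.inv =
        𝟙 _ ≫ (k.negOnePow • (shiftFunctor C k).map f); simp [smul_smul]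
    · change (k.negOnePow • (e.inv ≫ (shiftFunctor C k).map g)) ≫ 𝟙 _ =
        e.inv ≫ (k.negOnePow • (shiftFunctor C k).map g); simp
    · change (k.negOnePow • ((shiftFunctor C k).map h ≫ (shiftFunctorComm C 1 k).hom.app X)) ≫
        (shiftFunctor C 1).map (𝟙 _) = 𝟙 _ ≫
        (k.negOnePow • ((shiftFunctor C k).map h ≫ (shiftFunctorComm C 1 k).hom.app X))
      simp [smul_smul]
  · exact w.le_iso (((shiftFunctorCompIsoId C k (-k) (by ring)).app X).symm) hX
  · refine w.ge_iso (Iso.symm ?_) hY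
    exact ((shiftFunctorAdd' C k (-(k+1)) (-1) (by ring)).symm.app Y)

end WeightStructure


/-- Theorem 2.1.1(5): a weight-exact fully faithful exact functor detects the property of
killing weights `m,…,n`. -/
theorem killsWeights_of_map_of_weightExact_fullyFaithful
    {D : Type*} [Category D] [HasZeroObject D] [Preadditive D] [HasShift D ℤ]
    [∀ n : ℤ, (shiftFunctor D n).Additive] [Pretriangulated D]
    (w : WeightStructure C) (w' : WeightStructure D)
    (F : C ⥤ D) [F.CommShift ℤ] [F.IsTriangulated] [F.Full] [F.Faithful]
    (hle : ∀ X : C, w.le X → w'.le (F.obj X))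
    (hge : ∀ X : C, w.ge X → w'.ge (F.obj X))
    (m n : ℤ) (hmn : m ≤ n) {M N : C} (h : M ⟶ N)
    (hkill : w'.KillsWeights m n (F.map h)) :
    w.KillsWeights m n h := by
  classical
  obtain ⟨A, B, A', B', f, p, δ, f', p', δ', hd, hd', hz⟩ := hkill
  obtain ⟨A₀, B₀, f₀, p₀, δ₀, hd₀⟩ := w.exists_weightDecomp n M
  obtain ⟨A₀', B₀', f₀', p₀', δ₀', hd₀'⟩ := w.exists_weightDecomp (m - 1) N
  refine ⟨A₀, B₀, A₀', B₀', f₀, p₀, δ₀, f₀', p₀', δ₀', hd₀, hd₀', ?_⟩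
  -- `F` of objects of weights `≤ i` (resp. `≥ i`) have weights `≤ i` (resp. `≥ i`)
  have hleF : ∀ (i : ℤ) (X : C), w.leDeg i X → w'.leDeg i (F.obj X) := by
    intro i X hX
    exact w'.le_iso ((F.commShiftIso (-i)).app X) (hle _ hX)
  have hgeF : ∀ (i : ℤ) (X : C), w.geDeg i X → w'.geDeg i (F.obj X) := by
    intro i X hX
    exact w'.ge_iso ((F.commShiftIso (-i)).app X) (hge _ hX)
  -- lift `F.map f₀` through `f`
  have h1 : F.map f₀ ≫ p = 0 :=
    w'.orth_deg (hleF n A₀ hd₀.2.1) hd.2.2 _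
  obtain ⟨α, hα⟩ := Pretriangulated.Triangle.coyoneda_exact₂ _ hd.1 (F.map f₀) h1
  -- factor `F.map p₀'` through `p'`
  have h2 : f' ≫ F.map p₀' = 0 :=
    w'.orth_deg hd'.2.1 (hgeF _ _ hd₀'.2.2) _
  obtain ⟨β, hβ⟩ := Pretriangulated.Triangle.yoneda_exact₂ _ hd'.1 (F.map p₀') h2
  apply F.map_injective
  rw [F.map_comp, F.map_comp, F.map_zero, hα, hβ]
  have key : α ≫ f ≫ F.map h ≫ p' ≫ β = 0 :=
    (congrArg (fun x => α ≫ x) ((reassoc_of% hz) β)).trans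
      ((congrArg (fun x => α ≫ x) (zero_comp (f := β))).trans comp_zero)
  exact (Category.assoc _ _ _).trans key
end

section
/- Let C be an idempotent complete (Karoubian) triangulated category equipped with a weight structure w, and let M be an object of C such that for every integer n ≥ 1 there exists a distinguished triangle X_n → M → Y_n → X_n[1] with X_n ∈ C_{w≤0} and Y_n ∈ C_{w≥n+1}. Then there exists a distinguished triangle X → M → Y → X[1] with X ∈ C_{w≤0} and Y ∈ C_{w≥i} for every i ∈ ℤ (i.e. Y is left weight-degenerate). -/
open CategoryTheory CategoryTheory.Limits CategoryTheory.Pretriangulated ZeroObject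

universe v u

variable (C : Type u) [Category.{v} C] [HasZeroObject C] [Preadditive C] [HasShift C ℤ]
  [∀ n : ℤ, (shiftFunctor C n).Additive] [Pretriangulated C]

variable {C}

namespace WeightStructure

lemma geDeg_of_iso (w : WeightStructure C) {i : ℤ} {X Y : C} (e : X ≅ Y)
    (h : w.geDeg i X) : w.geDeg i Y :=
  w.ge_of_iso ((shiftFunctor C (-i)).mapIso e) h

lemma geDeg_of_retract (w : WeightStructure C) {i : ℤ} {X Y : C} (j : X ⟶ Y) (r : Y ⟶ X)
    (hjr : j ≫ r = 𝟙 X) (h : w.geDeg i Y) : w.geDeg i X :=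
  w.ge_retract ((shiftFunctor C (-i)).map j) ((shiftFunctor C (-i)).map r)
    (by rw [← Functor.map_comp, hjr]; exact (shiftFunctor C (-i)).map_id X) h

lemma geDeg_of_geDeg_succ (w : WeightStructure C) {j : ℤ} {Y : C}
    (h : w.geDeg (j + 1) Y) : w.geDeg j Y := by
  have h1 : w.ge ((shiftFunctor C (1 : ℤ)).obj ((shiftFunctor C (-(j + 1))).obj Y)) :=
    w.ge_shift h
  exact w.ge_of_iso (((shiftFunctorAdd' C (-(j + 1)) 1 (-j) (by ring)).app Y).symm) h1

lemma geDeg_down (w : WeightStructure C) {i j : ℤ} {Y : C} (hij : i ≤ j)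
    (h : w.geDeg j Y) : w.geDeg i Y := by
  obtain ⟨k, rfl⟩ : ∃ k : ℕ, j = i + k := ⟨(j - i).toNat, by omega⟩
  clear hij
  induction k with
  | zero => simpa using h
  | succ k ih =>
    refine ih ?_
    refine w.geDeg_of_geDeg_succ (j := i + k) ?_
    rw [show (i + (k : ℤ) + 1) = i + ((k + 1 : ℕ) : ℤ) by push_cast; ring]
    exact h

lemma geDeg_shift (w : WeightStructure C) {j k : ℤ} {Y : C}
    (h : w.geDeg (j - k) Y) : w.geDeg j ((shiftFunctor C k).obj Y) := by
  refine w.ge_of_iso ?_ h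
  exact (shiftFunctorAdd' C k (-j) (-(j - k)) (by ring)).app Y

lemma hom_eq_zero (w : WeightStructure C) {X Y : C} (hX : w.le X) (hY : w.geDeg 1 Y)
    (f : X ⟶ Y) : f = 0 := by
  set e : _ ≅ Y := (shiftFunctorCompIsoId C (-1 : ℤ) (1 : ℤ) (by ring)).app Y with he
  have h0 : f ≫ e.inv = 0 := w.orth hX hY (f ≫ e.inv)
  have : f = (f ≫ e.inv) ≫ e.hom := by simp
  rw [this, h0, zero_comp]

lemma hom_eq_zero' (w : WeightStructure C) {X Y : C} {k : ℤ} (hk : 1 ≤ k) (hX : w.le X)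
    (hY : w.geDeg k Y) (f : X ⟶ Y) : f = 0 :=
  w.hom_eq_zero hX (w.geDeg_down hk hY) f

end WeightStructure

/-- (From the proof of Theorem 2.3.4(II).) In a Karoubian triangulated category, if for every
`n ≥ 1` there is a distinguished triangle `Xₙ → M → Yₙ → Xₙ[1]` with `Xₙ ∈ C_{w≤0}` and
`Yₙ ∈ C_{w≥n+1}`, then there is a distinguished triangle `X → M → Y → X[1]` with `X ∈ C_{w≤0}`
and `Y` left weight-degenerate (`Y ∈ C_{w≥i}` for all `i`). -/
theorem exists_left_degenerate_decomposition [IsIdempotentComplete C]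
    (w : WeightStructure C) (M : C)
    (hM : ∀ n : ℤ, 1 ≤ n →
      ∃ (X Y : C) (f : X ⟶ M) (p : M ⟶ Y) (δ : Y ⟶ (shiftFunctor C (1 : ℤ)).obj X),
        Triangle.mk f p δ ∈ (distTriang C) ∧ w.le X ∧ w.geDeg (n + 1) Y) :
    ∃ (X Y : C) (f : X ⟶ M) (p : M ⟶ Y) (δ : Y ⟶ (shiftFunctor C (1 : ℤ)).obj X),
      Triangle.mk f p δ ∈ (distTriang C) ∧ w.le X ∧ ∀ i : ℤ, w.geDeg i Y := by
  obtain ⟨X, Y, f, p, δ, hT, hX, hY⟩ := hM 1 le_rfl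
  refine ⟨X, Y, f, p, δ, hT, hX, fun i => ?_⟩
  set n : ℤ := max 1 i with hn
  have hn1 : (1 : ℤ) ≤ n := le_max_left _ _
  have hni : i ≤ n + 1 := (le_max_right 1 i).trans (by omega)
  refine w.geDeg_down hni ?_
  obtain ⟨X', Y', f', p', δ', hT', hX', hY'⟩ := hM n hn1
  -- `f ≫ p' = 0` by orthogonality, so `f` factors through `f'`
  obtain ⟨a, ha⟩ : ∃ a : X ⟶ X', f = a ≫ f' := Triangle.coyoneda_exact₂ _ hT' f
    (w.hom_eq_zero' (by omega) hX hY' (f ≫ p'))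
  -- `f' ≫ p = 0` by orthogonality, so `f'` factors through `f`
  obtain ⟨b, hb⟩ : ∃ b : X' ⟶ X, f' = b ≫ f := Triangle.coyoneda_exact₂ _ hT f'
    (w.hom_eq_zero' (by omega) hX' (w.geDeg_down (by omega : (1:ℤ) ≤ 1 + 1) hY) (f' ≫ p))
  have hab : a ≫ b = 𝟙 X := by
    have h0 : (a ≫ b - 𝟙 X) ≫ f = 0 := by
      rw [Preadditive.sub_comp, Category.id_comp, Category.assoc, ← hb, ← ha, sub_self]
    obtain ⟨g, hg⟩ := Triangle.coyoneda_exact₂ _ (inv_rot_of_distTriang _ hT)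
      (a ≫ b - 𝟙 X) h0
    have hg0 : g = 0 :=
      w.hom_eq_zero' le_rfl hX
        (w.geDeg_shift (show w.geDeg (1 - (-1 : ℤ)) Y by simpa using hY)) g
    rw [hg0, zero_comp] at hg
    exact sub_eq_zero.mp hg
  have hba : b ≫ a = 𝟙 X' := by
    have h0 : (b ≫ a - 𝟙 X') ≫ f' = 0 := by
      rw [Preadditive.sub_comp, Category.id_comp, Category.assoc, ← ha, ← hb, sub_self]
    obtain ⟨g, hg⟩ := Triangle.coyoneda_exact₂ _ (inv_rot_of_distTriang _ hT')
      (b ≫ a - 𝟙 X') h0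
    have hg0 : g = 0 := by
      refine w.hom_eq_zero' le_rfl hX' (w.geDeg_shift ?_) g
      exact w.geDeg_down (by omega : (1:ℤ) - (-1) ≤ n + 1) hY'
    rw [hg0, zero_comp] at hg
    exact sub_eq_zero.mp hg
  -- complete to a morphism of triangles, whose third component is an isomorphism
  obtain ⟨c, hc1, hc2⟩ := complete_distinguished_triangle_morphism _ _ hT hT' a (𝟙 M)
    ((Category.comp_id f).trans ha)
  let φ : Triangle.mk f p δ ⟶ Triangle.mk f' p' δ' :=
    { hom₁ := a
      hom₂ := 𝟙 M
      hom₃ := c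
      comm₁ := (Category.comp_id f).trans ha
      comm₂ := by simpa using hc1
      comm₃ := hc2 }
  have hIa : IsIso a := ⟨b, hab, hba⟩
  have hIc : IsIso c := isIso₃_of_isIso₁₂ φ hT hT' hIa (by dsimp [φ]; exact IsIso.id M)
  exact w.geDeg_of_retract c (@CategoryTheory.inv _ _ _ _ c hIc) (@IsIso.hom_inv_id _ _ _ _ c hIc) hY'
end
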